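/- Let r : ℝ^n × ℝ^n → [0,∞) be continuous with r(q,p) > 0 whenever p ≠ 0 and r(q, c·p) = c · r(q,p) for all c ≥ 0, and set Ω = {(q,p) : r(q,p) ≤ 1}. Let H : ℝ/ℤ × ℝ^n × ℝ^n → ℝ be continuous and satisfy H(t, q, e^s p) = e^s H(t, q, p) for all s ≥ 0 whenever r(q,p) ≥ 1. Let b : ℝ/ℤ → ℝ^n be a C¹ loop, and for a continuous loop p : ℝ/ℤ → ℝ^n define the action 𝒜(b,p) = ∫₀¹ H(t, b(t), p(t)) dt − ∫₀¹ ⟨p(t), b'(t)⟩ dt. Assume H is sufficiently negative for b and Ω, meaning: every continuous p : ℝ/ℤ → ℝ^n with r(b(t), p(t)) > 1 for all t satisfies 𝒜(b,p) ≤ 0. Then the supremum S = sup{ 𝒜(b, p̃) : p̃ : ℝ/ℤ → ℝ^n continuous with r(b(t), p̃(t)) ≤ 1 for all t } is finite, and every continuous p : ℝ/ℤ → ℝ^n satisfies 𝒜(b,p) ≤ S. -/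

import Mathlib

open MeasureTheory Set
open scoped RealInnerProductSpace

/-- The Hamiltonian action `𝒜(b,p) = ∫₀¹ H(t,b(t),p(t)) dt − ∫₀¹ ⟨p(t), b'(t)⟩ dt`
of the lift `γ(t) = (b(t), p(t))` of the base loop `b`, in the trivialized
cotangent bundle `T*ℝⁿ = ℝⁿ × ℝⁿ` with Liouville form `λ = Σ pᵢ dqᵢ`. -/
noncomputable def liftAction {n : ℕ}
    (H : ℝ → EuclideanSpace ℝ (Fin n) → EuclideanSpace ℝ (Fin n) → ℝ)
    (b p : ℝ → EuclideanSpace ℝ (Fin n)) : ℝ :=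
  (∫ t in (0:ℝ)..1, H t (b t) (p t)) - ∫ t in (0:ℝ)..1, ⟪p t, deriv b t⟫

set_option maxHeartbeats 1600000 in
/-- Proposition 3.1 of the paper: if `H` is sufficiently negative for the base
loop `b` and the fiberwise star-shaped domain `Ω = {r ≤ 1}`, then the actions
of lifts of `b` contained in `Ω` are bounded above, and the action of every
lift of `b` is bounded by their supremum. -/
theorem stmt_13 (n : ℕ)
    (r : EuclideanSpace ℝ (Fin n) → EuclideanSpace ℝ (Fin n) → ℝ)
    (hrcont : Continuous (fun z : EuclideanSpace ℝ (Fin n) × EuclideanSpace ℝ (Fin n) => r z.1 z.2))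
    (hrnonneg : ∀ q p, 0 ≤ r q p)
    (hrpos : ∀ q p, p ≠ 0 → 0 < r q p)
    (hrhom : ∀ q p, ∀ c : ℝ, 0 ≤ c → r q (c • p) = c * r q p)
    (H : ℝ → EuclideanSpace ℝ (Fin n) → EuclideanSpace ℝ (Fin n) → ℝ)
    (hHcont : Continuous (fun z : ℝ × EuclideanSpace ℝ (Fin n) × EuclideanSpace ℝ (Fin n) =>
      H z.1 z.2.1 z.2.2))
    (hHper : ∀ q p, Function.Periodic (fun t => H t q p) 1)
    (hHhom : ∀ t q p, ∀ s : ℝ, 0 ≤ s → 1 ≤ r q p →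
      H t q (Real.exp s • p) = Real.exp s * H t q p)
    (b : ℝ → EuclideanSpace ℝ (Fin n))
    (hb : ContDiff ℝ 1 b) (hbper : Function.Periodic b 1)
    -- `H` is sufficiently negative for `b` and `Ω`
    (hneg : ∀ p : ℝ → EuclideanSpace ℝ (Fin n), Continuous p → Function.Periodic p 1 →
      (∀ t, 1 < r (b t) (p t)) → liftAction H b p ≤ 0) :
    BddAbove {x : ℝ | ∃ p : ℝ → EuclideanSpace ℝ (Fin n),
        Continuous p ∧ Function.Periodic p 1 ∧ (∀ t, r (b t) (p t) ≤ 1) ∧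
        x = liftAction H b p} ∧
    ∀ p : ℝ → EuclideanSpace ℝ (Fin n), Continuous p → Function.Periodic p 1 →
      liftAction H b p ≤
        sSup {x : ℝ | ∃ p' : ℝ → EuclideanSpace ℝ (Fin n),
          Continuous p' ∧ Function.Periodic p' 1 ∧ (∀ t, r (b t) (p' t) ≤ 1) ∧
          x = liftAction H b p'} := by
  classical
  have hbc : Continuous b := hb.continuous
  have hb' : Continuous (deriv b) := hb.continuous_deriv le_rfl
  have hb'per : ∀ t : ℝ, deriv b (t + 1) = deriv b t := by
    intro t
    have hfun : (fun x => b (x + 1)) = b := funext fun x => hbper x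
    calc deriv b (t + 1) = deriv (fun x => b (x + 1)) t := (deriv_comp_add_const b 1 t).symm
      _ = deriv b t := by rw [hfun]
  have hr0 : ∀ q : EuclideanSpace ℝ (Fin n), r q 0 = 0 := by
    intro q
    have := hrhom q 0 0 le_rfl
    simpa using this
  -- Lemma B : pointwise negativity on/outside the boundary
  have keyB : ∀ (t₀ : ℝ) (v : EuclideanSpace ℝ (Fin n)), 1 ≤ r (b t₀) v →
      H t₀ (b t₀) v ≤ ⟪v, deriv b t₀⟫ := by
    intro t₀ v hv
    by_contra hcon
    push_neg at hcon
    have hv0 : v ≠ 0 := by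
      rintro rfl
      rw [hr0] at hv
      linarith
    have rpos : ∀ t, 0 < r (b t) v := fun t => hrpos _ _ hv0
    have ha : 1 ≤ r (b t₀) v := hv
    have hapos : 0 < r (b t₀) v := lt_of_lt_of_le one_pos ha
    set a : ℝ := r (b t₀) v with ha_def
    set w : ℝ → EuclideanSpace ℝ (Fin n) := fun t => (a / r (b t) v) • v with hw_def
    have hrbv : Continuous fun t => r (b t) v :=
      hrcont.comp (hbc.prodMk continuous_const)
    have hwcont : Continuous w :=
      ((continuous_const.div hrbv fun t => (rpos t).ne').smul continuous_const)
    have hwper : Function.Periodic w 1 := by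
      intro t; simp only [hw_def, hbper t]
    have hrw : ∀ t, r (b t) (w t) = a := by
      intro t
      have hcpos : 0 < a / r (b t) v := div_pos hapos (rpos t)
      simp only [hw_def]
      rw [hrhom _ _ _ hcpos.le, div_mul_cancel₀ _ (rpos t).ne']
    have hwt₀ : w t₀ = v := by
      simp only [hw_def, ← ha_def, div_self hapos.ne', one_smul]
    set h : ℝ → ℝ := fun t => H t (b t) (w t) - ⟪w t, deriv b t⟫ with hh_def
    have hhcont : Continuous h :=
      (hHcont.comp (continuous_id.prodMk (hbc.prodMk hwcont))).sub (hwcont.inner hb')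
    have hhper : Function.Periodic h 1 := by
      intro t
      have h2 : w (t + 1) = w t := hwper t
      simp only [hh_def]
      rw [hbper t, h2, hb'per t]
      congr 1
      exact hHper (b t) (w t) t
    have hpos : 0 < h t₀ := by
      simp only [hh_def, hwt₀]
      linarith
    obtain ⟨ρ₀, hρ₀pos, hball⟩ := Metric.continuousAt_iff.mp
      (hhcont.continuousAt (x := t₀)) (h t₀ / 2) (half_pos hpos)
    set ρ : ℝ := min (ρ₀ / 2) (1/4) with hρ_def
    have hρpos : 0 < ρ := lt_min (by linarith) (by norm_num)
    have hρle : ρ ≤ 1/4 := min_le_right _ _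
    have hnear : ∀ t, |t - t₀| < ρ → h t₀ / 2 ≤ h t := by
      intro t ht
      have hd : dist t t₀ < ρ₀ := by
        rw [Real.dist_eq]
        calc |t - t₀| < ρ := ht
          _ ≤ ρ₀ / 2 := min_le_left _ _
          _ < ρ₀ := by linarith
      have hb2 := hball hd
      rw [Real.dist_eq, abs_lt] at hb2
      linarith [hb2.1]
    set β : ℝ → ℝ := fun t =>
      max 0 (Real.cos (2 * Real.pi * (t - t₀)) - Real.cos (2 * Real.pi * ρ)) with hβ_def
    have hβcont : Continuous β := continuous_const.max
      ((Real.continuous_cos.comp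
        (continuous_const.mul (continuous_id.sub continuous_const))).sub continuous_const)
    have hβper : Function.Periodic β 1 := by
      intro t
      have harg : 2 * Real.pi * (t + 1 - t₀) = 2 * Real.pi * (t - t₀) + (1:ℤ) * (2 * Real.pi) := by
        push_cast; ring
      simp only [hβ_def, harg, Real.cos_add_int_mul_two_pi]
    have hβ0 : ∀ t, 0 ≤ β t := fun t => le_max_left _ _
    have hπ := Real.pi_pos
    have h2πρpos : 0 < 2 * Real.pi * ρ := mul_pos (by positivity) hρpos
    have h2πρle : 2 * Real.pi * ρ ≤ Real.pi := by
      have hh := mul_le_mul_of_nonneg_left hρle (show (0:ℝ) ≤ 2 * Real.pi by positivity)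
      linarith
    have hcosρlt : Real.cos (2 * Real.pi * ρ) < 1 := by
      have hlt := Real.strictAntiOn_cos ⟨le_rfl, Real.pi_pos.le⟩
        ⟨h2πρpos.le, h2πρle⟩ h2πρpos
      simpa [Real.cos_zero] using hlt
    have hsupp : ∀ t, 0 < β t → h t₀ / 2 ≤ h t := by
      intro t hβt
      have hgt : Real.cos (2 * Real.pi * ρ) < Real.cos (2 * Real.pi * (t - t₀)) := by
        by_contra hle
        push_neg at hle
        have hz : β t = 0 := max_eq_left (by linarith)
        rw [hz] at hβt; exact lt_irrefl 0 hβt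
      set y : ℝ := t - t₀ - round (t - t₀) with hy_def
      have hyle : |y| ≤ 1/2 := by rw [hy_def]; exact abs_sub_round _
      have hcosy : Real.cos (2 * Real.pi * (t - t₀)) = Real.cos (2 * Real.pi * |y|) := by
        have harg : 2 * Real.pi * (t - t₀)
            = 2 * Real.pi * y + (round (t - t₀) : ℤ) * (2 * Real.pi) := by
          rw [hy_def]; push_cast; ring
        have habs : 2 * Real.pi * |y| = |2 * Real.pi * y| := by
          rw [abs_mul, abs_of_pos (by positivity : (0:ℝ) < 2 * Real.pi)]
        rw [harg, Real.cos_add_int_mul_two_pi, habs, Real.cos_abs]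
      have hylt : |y| < ρ := by
        by_contra hge
        push_neg at hge
        have h1 : 2 * Real.pi * ρ ≤ 2 * Real.pi * |y| :=
          mul_le_mul_of_nonneg_left hge (by positivity)
        have h2 : 2 * Real.pi * |y| ≤ Real.pi := by
          have hh := mul_le_mul_of_nonneg_left hyle (show (0:ℝ) ≤ 2 * Real.pi by positivity)
          linarith
        have h3 : Real.cos (2 * Real.pi * |y|) ≤ Real.cos (2 * Real.pi * ρ) := by
          rcases eq_or_lt_of_le h1 with heq | hlt2
          · rw [heq]
          · exact (Real.strictAntiOn_cos ⟨h2πρpos.le, h2πρle⟩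
              ⟨by positivity, h2⟩ hlt2).le
        rw [hcosy] at hgt
        linarith
      have hper' := (hhper.int_mul (round (t - t₀))) (t₀ + y)
      have hteq : t₀ + y + (round (t - t₀) : ℝ) * 1 = t := by rw [hy_def]; push_cast; ring
      rw [hteq] at hper'
      have hnear' := hnear (t₀ + y) (by simpa [add_sub_cancel_left] using hylt)
      rw [hper']
      exact hnear'
    set u₀ : ℝ := Int.fract t₀ with hu₀_def
    have hu₀0 : 0 ≤ u₀ := Int.fract_nonneg _
    have hu₀1 : u₀ < 1 := Int.fract_lt_one _
    have hβu₀ : β u₀ = 1 - Real.cos (2 * Real.pi * ρ) := by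
      have hshift := (hβper.int_mul (-⌊t₀⌋)) t₀
      have hteq : t₀ + ((-⌊t₀⌋ : ℤ) : ℝ) * 1 = u₀ := by
        rw [hu₀_def, Int.fract]; push_cast; ring
      rw [hteq] at hshift
      rw [hshift]
      simp only [hβ_def, sub_self, mul_zero, Real.cos_zero]
      exact max_eq_right (by linarith)
    have hβu₀pos : 0 < β u₀ := by rw [hβu₀]; linarith
    obtain ⟨σ, hσpos, hσball⟩ := Metric.continuousAt_iff.mp
      (hβcont.continuousAt (x := u₀)) (β u₀ / 2) (by linarith)
    set d : ℝ := min (u₀ + σ / 2) 1 with hd_def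
    have hud : u₀ < d := lt_min (by linarith) hu₀1
    have hd1 : d ≤ 1 := min_le_right _ _
    have hβlow : ∀ t ∈ Icc u₀ d, β u₀ / 2 ≤ β t := by
      intro t ht
      have hdist : dist t u₀ < σ := by
        rw [Real.dist_eq, abs_lt]
        constructor
        · linarith [ht.1]
        · have h5 : t ≤ u₀ + σ / 2 := le_trans ht.2 (min_le_left _ _)
          linarith
      have hσb := hσball hdist
      rw [Real.dist_eq, abs_lt] at hσb
      linarith [hσb.1]
    have hI₀pos : 0 < ∫ t in (0:ℝ)..1, β t := by
      have i1 : IntervalIntegrable β volume 0 u₀ := hβcont.intervalIntegrable _ _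
      have i2 : IntervalIntegrable β volume u₀ d := hβcont.intervalIntegrable _ _
      have i3 : IntervalIntegrable β volume d 1 := hβcont.intervalIntegrable _ _
      have e2 : (∫ t in u₀..d, β t) + (∫ t in d..(1:ℝ), β t) = ∫ t in u₀..(1:ℝ), β t :=
        intervalIntegral.integral_add_adjacent_intervals i2 i3
      have e1 : (∫ t in (0:ℝ)..u₀, β t) + (∫ t in u₀..(1:ℝ), β t) = ∫ t in (0:ℝ)..1, β t :=
        intervalIntegral.integral_add_adjacent_intervals i1 (hβcont.intervalIntegrable _ _)
      have nn1 : 0 ≤ ∫ t in (0:ℝ)..u₀, β t :=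
        intervalIntegral.integral_nonneg hu₀0 (fun u _ => hβ0 u)
      have nn3 : 0 ≤ ∫ t in d..(1:ℝ), β t :=
        intervalIntegral.integral_nonneg hd1 (fun u _ => hβ0 u)
      have mid : (d - u₀) * (β u₀ / 2) ≤ ∫ t in u₀..d, β t := by
        have hc := intervalIntegral.integral_mono_on (μ := volume) hud.le
          intervalIntegrable_const i2 (f := fun _ => β u₀ / 2) (fun t ht => hβlow t ht)
        rwa [intervalIntegral.integral_const, smul_eq_mul] at hc
      have hprod : 0 < (d - u₀) * (β u₀ / 2) := mul_pos (by linarith) (by linarith)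
      linarith [e1, e2, nn1, nn3, mid, hprod]
    have hβh : (h t₀ / 2) * (∫ t in (0:ℝ)..1, β t) ≤ ∫ t in (0:ℝ)..1, β t * h t := by
      rw [← intervalIntegral.integral_const_mul]
      apply intervalIntegral.integral_mono_on zero_le_one
        ((continuous_const.mul hβcont).intervalIntegrable _ _)
        ((hβcont.mul hhcont).intervalIntegrable _ _)
      intro t _
      show (h t₀ / 2) * β t ≤ β t * h t
      rcases (hβ0 t).eq_or_lt with h0 | h0
      · rw [← h0]; simp
      · calc (h t₀ / 2) * β t = β t * (h t₀ / 2) := by ring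
          _ ≤ β t * h t := mul_le_mul_of_nonneg_left (hsupp t h0) h0.le
    set K : ℝ := (2 * |∫ t in (0:ℝ)..1, h t| + 1) / ((h t₀ / 2) * ∫ t in (0:ℝ)..1, β t)
      with hK_def
    have hKpos : 0 < K := div_pos (by positivity) (mul_pos (half_pos hpos) hI₀pos)
    set P : ℝ → EuclideanSpace ℝ (Fin n) := fun t => (2 + K * β t) • w t with hP_def
    have hcoef : ∀ t, (2:ℝ) ≤ 2 + K * β t := fun t =>
      le_add_of_nonneg_right (mul_nonneg hKpos.le (hβ0 t))
    have hPcont : Continuous P := (continuous_const.add (continuous_const.mul hβcont)).smul hwcont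
    have hPper : Function.Periodic P 1 := by
      intro t; simp only [hP_def, hβper t, hwper t]
    have hPout : ∀ t, 1 < r (b t) (P t) := by
      intro t
      have h2 : r (b t) ((2 + K * β t) • w t) = (2 + K * β t) * r (b t) (w t) :=
        hrhom _ _ _ (by linarith [hcoef t])
      simp only [hP_def]
      rw [h2, hrw t]
      nlinarith [hcoef t, ha]
    have hHP : ∀ t, H t (b t) (P t) = (2 + K * β t) * H t (b t) (w t) := by
      intro t
      have hc : (0:ℝ) < 2 + K * β t := by linarith [hcoef t]
      have hs : (0:ℝ) ≤ Real.log (2 + K * β t) := Real.log_nonneg (by linarith [hcoef t])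
      have hhom := hHhom t (b t) (w t) _ hs (by rw [hrw t]; exact ha)
      rw [Real.exp_log hc] at hhom
      simpa only [hP_def] using hhom
    have intw1 : IntervalIntegrable (fun t => H t (b t) (P t)) volume 0 1 :=
      (hHcont.comp (continuous_id.prodMk (hbc.prodMk hPcont))).intervalIntegrable _ _
    have intw2 : IntervalIntegrable (fun t => ⟪P t, deriv b t⟫) volume 0 1 :=
      (hPcont.inner hb').intervalIntegrable _ _
    have hAP : liftAction H b P = ∫ t in (0:ℝ)..1, (2 + K * β t) * h t := by
      unfold liftAction
      rw [← intervalIntegral.integral_sub intw1 intw2]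
      apply intervalIntegral.integral_congr
      intro t _
      have hip : ⟪P t, deriv b t⟫ = (2 + K * β t) * ⟪w t, deriv b t⟫ := by
        simp only [hP_def]; exact real_inner_smul_left _ _ _
      show H t (b t) (P t) - ⟪P t, deriv b t⟫ = (2 + K * β t) * h t
      simp only [hh_def]
      rw [hHP t, hip]
      ring
    have hsplit2 : (∫ t in (0:ℝ)..1, (2 + K * β t) * h t)
        = 2 * (∫ t in (0:ℝ)..1, h t) + K * ∫ t in (0:ℝ)..1, β t * h t := by
      have hfun : (fun t => (2 + K * β t) * h t) = fun t => 2 * h t + K * (β t * h t) := by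
        funext t; ring
      rw [hfun, intervalIntegral.integral_add (f := fun t => 2 * h t) (g := fun t => K * (β t * h t))
        ((continuous_const.mul hhcont).intervalIntegrable _ _)
        ((continuous_const.mul (hβcont.mul hhcont)).intervalIntegrable _ _),
        intervalIntegral.integral_const_mul, intervalIntegral.integral_const_mul]
    have hle0 := hneg P hPcont hPper hPout
    have hKmul : K * ((h t₀ / 2) * ∫ t in (0:ℝ)..1, β t)
        = 2 * |∫ t in (0:ℝ)..1, h t| + 1 := by
      rw [hK_def]
      exact div_mul_cancel₀ _ (mul_pos (half_pos hpos) hI₀pos).ne'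
    have hKβh : K * ((h t₀ / 2) * ∫ t in (0:ℝ)..1, β t)
        ≤ K * ∫ t in (0:ℝ)..1, β t * h t :=
      mul_le_mul_of_nonneg_left hβh hKpos.le
    have habs := neg_abs_le (∫ t in (0:ℝ)..1, h t)
    rw [hAP, hsplit2] at hle0
    linarith

  -- a bound for the fibers over the base loop
  obtain ⟨R, hR0, hR⟩ : ∃ R : ℝ, 0 ≤ R ∧ ∀ t ∈ Icc (0:ℝ) 1,
      ∀ v : EuclideanSpace ℝ (Fin n), r (b t) v ≤ 1 → ‖v‖ ≤ R := by
    rcases subsingleton_or_nontrivial (EuclideanSpace ℝ (Fin n)) with hs | hs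
    · exact ⟨0, le_rfl, fun t _ v _ => by rw [Subsingleton.elim v (0 : EuclideanSpace ℝ (Fin n)), norm_zero]⟩
    · obtain ⟨x, hx0⟩ := exists_ne (0 : EuclideanSpace ℝ (Fin n))
      have hxn : (0:ℝ) < ‖x‖ := norm_pos_iff.mpr hx0
      have hu₁ : ‖(‖x‖⁻¹ • x : EuclideanSpace ℝ (Fin n))‖ = 1 := by
        rw [norm_smul, norm_inv, norm_norm, inv_mul_cancel₀ hxn.ne']
      set Kc : Set (ℝ × EuclideanSpace ℝ (Fin n)) :=
        (Icc (0:ℝ) 1) ×ˢ (Metric.sphere (0 : EuclideanSpace ℝ (Fin n)) 1) with hKc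
      have hKcomp : IsCompact Kc := isCompact_Icc.prod (isCompact_sphere _ _)
      have hKne : Kc.Nonempty := by
        refine ⟨(0, ‖x‖⁻¹ • x), ⟨⟨le_rfl, zero_le_one⟩, ?_⟩⟩
        simpa [mem_sphere_zero_iff_norm] using hu₁
      obtain ⟨⟨tm, um⟩, hmem, hmin⟩ := hKcomp.exists_isMinOn hKne
        ((hrcont.comp ((hbc.comp continuous_fst).prodMk continuous_snd)).continuousOn)
      have humne : um ≠ 0 := by
        have : ‖um‖ = 1 := mem_sphere_zero_iff_norm.mp hmem.2
        intro h; rw [h, norm_zero] at this; norm_num at this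
      have hδ : 0 < r (b tm) um := hrpos _ _ humne
      refine ⟨(r (b tm) um)⁻¹, by positivity, ?_⟩
      intro t ht v hv
      rcases eq_or_ne v 0 with rfl | hv0
      · simp only [norm_zero]; positivity
      · have hvn : (0:ℝ) < ‖v‖ := norm_pos_iff.mpr hv0
        have hmem' : (t, ‖v‖⁻¹ • v) ∈ Kc := by
          refine ⟨ht, ?_⟩
          rw [mem_sphere_zero_iff_norm, norm_smul, norm_inv, norm_norm,
            inv_mul_cancel₀ hvn.ne']
        have h1 : r (b tm) um ≤ r (b t) (‖v‖⁻¹ • v) := hmin hmem'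
        have h2 : r (b t) (‖v‖⁻¹ • v) = ‖v‖⁻¹ * r (b t) v := hrhom _ _ _ (by positivity)
        rw [h2] at h1
        have h3 : r (b tm) um * ‖v‖ ≤ r (b t) v := by
          have := mul_le_mul_of_nonneg_right h1 hvn.le
          rwa [inv_mul_eq_div, div_mul_cancel₀ _ hvn.ne'] at this
        have h4 : r (b tm) um * ‖v‖ ≤ 1 := h3.trans hv
        have h5 : (0:ℝ) < (r (b tm) um)⁻¹ := inv_pos.mpr hδ
        nlinarith [inv_mul_cancel₀ hδ.ne', mul_le_mul_of_nonneg_left h4 h5.le]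
  -- bound for H on the compact region
  obtain ⟨M₁, hM₁⟩ : ∃ M₁ : ℝ, ∀ t ∈ Icc (0:ℝ) 1, ∀ v : EuclideanSpace ℝ (Fin n),
      ‖v‖ ≤ R → H t (b t) v ≤ M₁ := by
    have hCHcomp : IsCompact ((Icc (0:ℝ) 1) ×ˢ ((b '' Icc (0:ℝ) 1) ×ˢ
        (Metric.closedBall (0 : EuclideanSpace ℝ (Fin n)) R))) :=
      isCompact_Icc.prod ((isCompact_Icc.image hbc).prod (isCompact_closedBall _ _))
    obtain ⟨M₁, hM₁⟩ := (hCHcomp.image hHcont).bddAbove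
    refine ⟨M₁, fun t ht v hvR => ?_⟩
    exact hM₁ ⟨(t, b t, v), ⟨ht, ⟨mem_image_of_mem b ht,
      by simpa [Metric.mem_closedBall, dist_zero_right] using hvR⟩⟩, rfl⟩
  -- bound for deriv b
  obtain ⟨M₂, hM₂0, hM₂⟩ : ∃ M₂ : ℝ, 0 ≤ M₂ ∧ ∀ t ∈ Icc (0:ℝ) 1, ‖deriv b t‖ ≤ M₂ := by
    obtain ⟨M₂, hM₂⟩ := isCompact_Icc.exists_bound_of_continuousOn
      (f := deriv b) (s := Icc (0:ℝ) 1) hb'.continuousOn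
    exact ⟨M₂, le_trans (norm_nonneg (deriv b 0)) (hM₂ 0 ⟨le_rfl, zero_le_one⟩), hM₂⟩
  -- the uniform bound for lifts inside Ω
  have hbound : ∀ p : ℝ → EuclideanSpace ℝ (Fin n), Continuous p →
      (∀ t, r (b t) (p t) ≤ 1) → liftAction H b p ≤ M₁ + R * M₂ := by
    intro p hp hpin
    have int1 : IntervalIntegrable (fun t => H t (b t) (p t)) volume 0 1 :=
      (hHcont.comp (continuous_id.prodMk (hbc.prodMk hp))).intervalIntegrable _ _
    have int2 : IntervalIntegrable (fun t => ⟪p t, deriv b t⟫) volume 0 1 :=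
      (hp.inner hb').intervalIntegrable _ _
    have b1 : (∫ t in (0:ℝ)..1, H t (b t) (p t)) ≤ M₁ := by
      have := intervalIntegral.integral_mono_on (μ := volume) zero_le_one int1
        intervalIntegrable_const (g := fun _ => M₁)
        (fun t ht => hM₁ t ht _ (hR t ht _ (hpin t)))
      simpa using this
    have b2 : -(R * M₂) ≤ ∫ t in (0:ℝ)..1, ⟪p t, deriv b t⟫ := by
      have := intervalIntegral.integral_mono_on (μ := volume) zero_le_one
        intervalIntegrable_const int2 (f := fun _ => -(R * M₂))
        (fun t ht => by
          have h1 := abs_real_inner_le_norm (p t) (deriv b t)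
          have h2 : ‖p t‖ * ‖deriv b t‖ ≤ R * M₂ :=
            mul_le_mul (hR t ht _ (hpin t)) (hM₂ t ht) (norm_nonneg _) hR0
          have h3 := neg_abs_le (⟪p t, deriv b t⟫ : ℝ)
          show -(R * M₂) ≤ ⟪p t, deriv b t⟫
          linarith)
      simpa using this
    unfold liftAction
    linarith
  have hBdd : BddAbove {x : ℝ | ∃ p : ℝ → EuclideanSpace ℝ (Fin n),
      Continuous p ∧ Function.Periodic p 1 ∧ (∀ t, r (b t) (p t) ≤ 1) ∧
      x = liftAction H b p} := by
    refine ⟨M₁ + R * M₂, ?_⟩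
    rintro x ⟨p, hpc, _, hpin, rfl⟩
    exact hbound p hpc hpin
  refine ⟨hBdd, ?_⟩
  intro p hpc hpper
  set f : ℝ → ℝ := fun t => r (b t) (p t) with hf_def
  set m : ℝ → ℝ := fun t => max (f t) 1 with hm_def
  have hm1 : ∀ t, 1 ≤ m t := fun t => le_max_right _ _
  have hmpos : ∀ t, 0 < m t := fun t => lt_of_lt_of_le one_pos (hm1 t)
  set pt : ℝ → EuclideanSpace ℝ (Fin n) := fun t => (m t)⁻¹ • p t with hpt_def
  have hmcont : Continuous m := ((hrcont.comp (hbc.prodMk hpc)).max continuous_const)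
  have hptcont : Continuous pt := (hmcont.inv₀ fun t => (hmpos t).ne').smul hpc
  have hptper : Function.Periodic pt 1 := by
    intro t
    simp only [hpt_def, hm_def, hf_def, hbper t, hpper t]
  have hptin : ∀ t, r (b t) (pt t) ≤ 1 := by
    intro t
    have : r (b t) (pt t) = (m t)⁻¹ * f t := by
      simp only [hpt_def]
      exact hrhom _ _ _ (by positivity)
    rw [this]
    calc (m t)⁻¹ * f t ≤ (m t)⁻¹ * m t := by
          have := le_max_left (f t) 1
          have h0 : (0:ℝ) ≤ (m t)⁻¹ := by positivity
          exact mul_le_mul_of_nonneg_left this h0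
      _ = 1 := inv_mul_cancel₀ (hmpos t).ne'
  have hpoint : ∀ t, H t (b t) (p t) - ⟪p t, deriv b t⟫ ≤
      H t (b t) (pt t) - ⟪pt t, deriv b t⟫ := by
    intro t
    rcases le_or_gt (f t) 1 with hle | hlt
    · have hmeq : m t = 1 := max_eq_right hle
      simp [hpt_def, hmeq]
    · have hmeq : m t = f t := max_eq_left hlt.le
      have hfpos : 0 < f t := lt_trans one_pos hlt
      have hrpt : r (b t) (pt t) = 1 := by
        have : r (b t) (pt t) = (m t)⁻¹ * f t := by
          simp only [hpt_def]
          exact hrhom _ _ _ (by positivity)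
        rw [this, hmeq]
        field_simp
      have hkey := keyB t (pt t) (le_of_eq hrpt.symm)
      have hpeq : p t = f t • pt t := by
        simp only [hpt_def, hmeq, smul_smul]
        rw [mul_inv_cancel₀ hfpos.ne', one_smul]
      have hHp : H t (b t) (p t) = f t * H t (b t) (pt t) := by
        have hs : (0:ℝ) ≤ Real.log (f t) := Real.log_nonneg hlt.le
        have := hHhom t (b t) (pt t) _ hs (le_of_eq hrpt.symm)
        rw [Real.exp_log hfpos] at this
        rw [hpeq, this]
      have hip : ⟪p t, deriv b t⟫ = f t * ⟪pt t, deriv b t⟫ := by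
        rw [hpeq, real_inner_smul_left]
      rw [hHp, hip]
      nlinarith [hkey, hlt]
  have int1p : IntervalIntegrable (fun t => H t (b t) (p t)) volume 0 1 :=
    (hHcont.comp (continuous_id.prodMk (hbc.prodMk hpc))).intervalIntegrable _ _
  have int2p : IntervalIntegrable (fun t => ⟪p t, deriv b t⟫) volume 0 1 :=
    (hpc.inner hb').intervalIntegrable _ _
  have int1pt : IntervalIntegrable (fun t => H t (b t) (pt t)) volume 0 1 :=
    (hHcont.comp (continuous_id.prodMk (hbc.prodMk hptcont))).intervalIntegrable _ _
  have int2pt : IntervalIntegrable (fun t => ⟪pt t, deriv b t⟫) volume 0 1 :=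
    (hptcont.inner hb').intervalIntegrable _ _
  have hmono : liftAction H b p ≤ liftAction H b pt := by
    unfold liftAction
    rw [← intervalIntegral.integral_sub int1p int2p,
      ← intervalIntegral.integral_sub int1pt int2pt]
    exact intervalIntegral.integral_mono_on zero_le_one (int1p.sub int2p)
      (int1pt.sub int2pt) (fun t _ => hpoint t)
  exact hmono.trans (le_csSup hBdd ⟨pt, hptcont, hptper, hptin, rfl⟩)
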